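/- Tensor trace maximization (Theorem 3.2): let A ∈ ℝ^{m×m×p} be f-symmetric and f-positive-definite. Then max over V ∈ ℝ^{m×d×p} with V^T * V = I of Trace_f(V^T * A * V) equals (1/p) Σ_{i=1}^p Σ_{j=1}^d λ_j(Â_i), where λ_1(Â_i) ≥ … ≥ λ_m(Â_i) are the eigenvalues of the i-th Fourier-domain frontal slice Â_i. -/

import Mathlib

open Complex Matrix BigOperators
open scoped Kronecker ComplexOrder

/-- primitive root ω = exp(-2πi/p) used in the DFT. -/
noncomputable def tOmega (p : ℕ) : ℂ := Complex.exp (-(2 * Real.pi * Complex.I) / p)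

/-- unitary DFT matrix of order ℓ, (F)_{k,j} = ω^{k j}/√ℓ (0-based indices). -/
noncomputable def dftMatrix (ℓ : ℕ) : Matrix (Fin ℓ) (Fin ℓ) ℂ :=
  Matrix.of fun k j => (tOmega ℓ) ^ ((k : ℕ) * (j : ℕ)) / (Real.sqrt ℓ : ℂ)

/-- unnormalized mode-3 DFT of a real third-order tensor given by its frontal slices. -/
noncomputable def dft3 {m n p : ℕ} (A : Fin p → Matrix (Fin m) (Fin n) ℝ) :
    Fin p → Matrix (Fin m) (Fin n) ℂ :=
  fun k => ∑ l : Fin p, (tOmega p) ^ ((k : ℕ) * (l : ℕ)) • (A l).map (fun x => (x : ℂ))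

/-- t-product of third-order tensors (circular convolution of frontal slices),
    equivalently MatVec⁻¹[Bcirc(A)·MatVec(B)]. -/
def tProd {m l n p : ℕ} (A : Fin p → Matrix (Fin m) (Fin l) ℝ)
    (B : Fin p → Matrix (Fin l) (Fin n) ℝ) : Fin p → Matrix (Fin m) (Fin n) ℝ :=
  fun k => ∑ j : Fin p, A (k - j) * B j

/-- t-transpose: transpose each frontal slice and reverse the order of slices 2,…,p. -/
def tTrans {m n p : ℕ} (A : Fin p → Matrix (Fin m) (Fin n) ℝ) :
    Fin p → Matrix (Fin n) (Fin m) ℝ :=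
  fun k => (A (-k))ᵀ

/-- identity tensor: first frontal slice is I, the others vanish. -/
def tId (m p : ℕ) : Fin p → Matrix (Fin m) (Fin m) ℝ :=
  fun k => if (k : ℕ) = 0 then 1 else 0

/-- f-trace: average of the traces of the Fourier-domain frontal slices. -/
noncomputable def tTraceF {m p : ℕ} (A : Fin p → Matrix (Fin m) (Fin m) ℝ) : ℂ :=
  (1 / (p : ℂ)) * ∑ i : Fin p, (dft3 A i).trace

/-- squared Frobenius norm of a tensor. -/
def frob2 {m n p : ℕ} (A : Fin p → Matrix (Fin m) (Fin n) ℝ) : ℝ :=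
  ∑ k : Fin p, ∑ r : Fin m, ∑ c : Fin n, (A k r c) ^ 2

/-- Frobenius inner product of tensors. -/
def finner {m n p : ℕ} (A B : Fin p → Matrix (Fin m) (Fin n) ℝ) : ℝ :=
  ∑ k : Fin p, ∑ r : Fin m, ∑ c : Fin n, A k r c * B k r c

/-- block circulant matrix of a tensor (complex-valued entries). -/
noncomputable def bcirc {m n p : ℕ} (A : Fin p → Matrix (Fin m) (Fin n) ℝ) :
    Matrix (Fin p × Fin m) (Fin p × Fin n) ℂ :=
  Matrix.of fun x y => (A (x.1 - y.1) x.2 y.2 : ℂ)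

section AuxLemmas
open Polynomial

lemma tOmega_eq_inv (p : ℕ) : tOmega p = (Complex.exp (2 * Real.pi * Complex.I / p))⁻¹ := by
  rw [tOmega, neg_div, Complex.exp_neg]

lemma tOmega_isPrimitiveRoot {p : ℕ} (hp : p ≠ 0) : IsPrimitiveRoot (tOmega p) p := by
  rw [tOmega_eq_inv]
  exact (Complex.isPrimitiveRoot_exp p hp).inv

lemma tOmega_ne_zero (p : ℕ) : tOmega p ≠ 0 := Complex.exp_ne_zero _

lemma tOmega_pow_p {p : ℕ} (hp : p ≠ 0) : tOmega p ^ p = 1 :=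
  (tOmega_isPrimitiveRoot hp).pow_eq_one

lemma tOmega_pow_mod {p : ℕ} (hp : p ≠ 0) (n : ℕ) : tOmega p ^ n = tOmega p ^ (n % p) := by
  conv_lhs => rw [← Nat.div_add_mod n p]
  rw [pow_add, pow_mul, tOmega_pow_p hp, one_pow, one_mul]

lemma tOmega_pow_modeq {p : ℕ} (hp : p ≠ 0) {a b : ℕ} (h : a % p = b % p) :
    tOmega p ^ a = tOmega p ^ b := by
  rw [tOmega_pow_mod hp a, tOmega_pow_mod hp b, h]

lemma conj_tOmega (p : ℕ) : (starRingEnd ℂ) (tOmega p) = (tOmega p)⁻¹ := by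
  rw [tOmega, ← Complex.exp_conj, ← Complex.exp_neg]
  congr 1
  have : (starRingEnd ℂ) (2 * ↑Real.pi * Complex.I) = -(2 * ↑Real.pi * Complex.I) := by
    simp [Complex.ext_iff]
  rw [map_div₀, map_neg, this, neg_neg, Complex.conj_natCast, neg_div, neg_neg]

lemma conj_tOmega_pow (p n : ℕ) : (starRingEnd ℂ) (tOmega p ^ n) = (tOmega p ^ n)⁻¹ := by
  rw [map_pow, conj_tOmega, inv_pow]

lemma neg_val_add {p : ℕ} (hp : p ≠ 0) (i : Fin p) : p ∣ ((-i : Fin p).val + i.val) := by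
  haveI : NeZero p := ⟨hp⟩
  have : ((-i : Fin p).val + i.val) % p = 0 := by
    have := Fin.val_add (-i) i
    rw [neg_add_cancel, Fin.val_zero] at this
    exact this.symm
  exact Nat.dvd_of_mod_eq_zero this

lemma tOmega_neg_mul {p : ℕ} (hp : p ≠ 0) (i : Fin p) (a : ℕ) :
    tOmega p ^ ((-i : Fin p).val * a) = (starRingEnd ℂ) (tOmega p ^ (i.val * a)) := by
  rw [conj_tOmega_pow]
  have h1 : tOmega p ^ ((-i : Fin p).val * a) * tOmega p ^ (i.val * a) = 1 := by
    rw [← pow_add, ← add_mul]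
    obtain ⟨c, hc⟩ := neg_val_add hp i
    rw [hc, mul_assoc, pow_mul, tOmega_pow_p hp, one_pow]
  exact eq_inv_of_mul_eq_one_left h1

lemma tOmega_orthogonal {p : ℕ} (hp : p ≠ 0) (k l : Fin p) :
    ∑ i : Fin p, tOmega p ^ (k.val * i.val) * (starRingEnd ℂ) (tOmega p ^ (l.val * i.val)) =
      if k = l then (p : ℂ) else 0 := by
  have hps : ∀ i : Fin p, tOmega p ^ (k.val * i.val) * (starRingEnd ℂ) (tOmega p ^ (l.val * i.val))
      = (tOmega p ^ k.val * (tOmega p ^ l.val)⁻¹) ^ i.val := by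
    intro i
    have h1 : (tOmega p ^ (l.val * i.val))⁻¹ = ((tOmega p ^ l.val)⁻¹) ^ i.val := by
      rw [inv_pow, ← pow_mul]
    rw [conj_tOmega_pow, h1, pow_mul, ← mul_pow]
  simp_rw [hps]
  set x := tOmega p ^ k.val * (tOmega p ^ l.val)⁻¹ with hx
  rw [Fin.sum_univ_eq_sum_range (fun i => x ^ i)]
  by_cases h : k = l
  · subst h
    simp [hx, mul_inv_cancel₀ (pow_ne_zero _ (tOmega_ne_zero p))]
  · rw [if_neg h]
    have hx1 : x ≠ 1 := by
      intro hc
      apply h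
      have := (div_eq_one_iff_eq (pow_ne_zero _ (tOmega_ne_zero p))).mp (by rwa [div_eq_mul_inv])
      exact Fin.ext ((tOmega_isPrimitiveRoot hp).pow_inj k.isLt l.isLt this)
    have hxp : x ^ p = 1 := by
      have h1 : (tOmega p ^ k.val) ^ p = 1 := by
        rw [← pow_mul, mul_comm, pow_mul, tOmega_pow_p hp, one_pow]
      have h2 : (tOmega p ^ l.val) ^ p = 1 := by
        rw [← pow_mul, mul_comm, pow_mul, tOmega_pow_p hp, one_pow]
      rw [hx, mul_pow, h1, inv_pow, h2, inv_one, one_mul]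
    have := geom_sum_mul x p
    rw [hxp, sub_self] at this
    rcases mul_eq_zero.mp this with h1 | h1
    · exact h1
    · exact absurd (sub_eq_zero.mp h1) hx1

lemma dft3_apply {m n p : ℕ} (A : Fin p → Matrix (Fin m) (Fin n) ℝ) (k : Fin p)
    (r : Fin m) (c : Fin n) :
    dft3 A k r c = ∑ l : Fin p, tOmega p ^ (k.val * l.val) * ((A l r c : ℝ) : ℂ) := by
  simp [dft3, Finset.sum_apply, Matrix.sum_apply, Matrix.map_apply, smul_eq_mul]

lemma tOmega_mul_val_add {p : ℕ} (hp : p ≠ 0) (k a b : Fin p) :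
    tOmega p ^ (k.val * ((a + b : Fin p)).val) =
      tOmega p ^ (k.val * a.val) * tOmega p ^ (k.val * b.val) := by
  rw [← pow_add, ← mul_add]
  apply tOmega_pow_modeq hp
  apply Nat.ModEq.mul_left
  rw [Fin.val_add]
  exact Nat.mod_mod_of_dvd _ dvd_rfl

lemma dft3_tProd {m l n p : ℕ} (hp : p ≠ 0) (A : Fin p → Matrix (Fin m) (Fin l) ℝ)
    (B : Fin p → Matrix (Fin l) (Fin n) ℝ) (k : Fin p) :
    dft3 (tProd A B) k = dft3 A k * dft3 B k := by
  haveI : NeZero p := ⟨hp⟩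
  ext r c
  rw [Matrix.mul_apply]
  simp only [dft3_apply, tProd, Matrix.sum_apply, Matrix.mul_apply, Finset.sum_mul,
    Finset.mul_sum]
  push_cast
  simp_rw [Finset.mul_sum]
  rw [Finset.sum_comm]
  conv_rhs => rw [Finset.sum_comm]
  apply Finset.sum_congr rfl
  intro x1 _
  rw [Finset.sum_comm]
  apply Finset.sum_congr rfl
  intro x2 _
  rw [← Equiv.sum_comp (Equiv.addRight x1)
      (fun x => tOmega p ^ (k.val * x.val) * (((A (x - x1) r x2 : ℝ) : ℂ) * ((B x1 x2 c : ℝ) : ℂ)))]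
  simp only [Equiv.coe_addRight, add_sub_cancel_right]
  apply Finset.sum_congr rfl
  intro i _
  rw [tOmega_mul_val_add hp k i x1]
  ring

lemma dft3_tTrans {m n p : ℕ} (hp : p ≠ 0) (V : Fin p → Matrix (Fin m) (Fin n) ℝ) (k : Fin p) :
    dft3 (tTrans V) k = (dft3 V k)ᴴ := by
  haveI : NeZero p := ⟨hp⟩
  ext r c
  rw [Matrix.conjTranspose_apply, dft3_apply, dft3_apply, star_sum]
  rw [← Equiv.sum_comp (Equiv.neg (Fin p))
      (fun l => tOmega p ^ (k.val * l.val) * ((tTrans V l r c : ℝ) : ℂ))]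
  apply Finset.sum_congr rfl
  intro l _
  simp only [Equiv.neg_apply, tTrans, Matrix.transpose_apply, neg_neg, star_mul',
    Complex.star_def, Complex.conj_ofReal]
  rw [mul_comm k.val, tOmega_neg_mul hp l k.val, mul_comm l.val k.val]

lemma dft3_tId {m p : ℕ} (hp : p ≠ 0) (k : Fin p) : dft3 (tId m p) k = 1 := by
  haveI : NeZero p := ⟨hp⟩
  rw [dft3]
  rw [Finset.sum_eq_single (0 : Fin p)]
  · simp [tId, Matrix.map_one]
  · intro l _ hl
    have : (l : ℕ) ≠ 0 := fun h => hl (Fin.ext h)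
    simp [tId, this]
  · simp

lemma dft3_neg {m n p : ℕ} (hp : p ≠ 0) (A : Fin p → Matrix (Fin m) (Fin n) ℝ) (k : Fin p) :
    dft3 A (-k) = (dft3 A k).map (starRingEnd ℂ) := by
  haveI : NeZero p := ⟨hp⟩
  ext r c
  rw [Matrix.map_apply, dft3_apply, dft3_apply, map_sum]
  apply Finset.sum_congr rfl
  intro l _
  rw [RingHom.map_mul, Complex.conj_ofReal, tOmega_neg_mul hp]

lemma dft3_idft {m n p : ℕ} (hp : p ≠ 0) (W : Fin p → Matrix (Fin m) (Fin n) ℂ)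
    (hconj : ∀ i, W (-i) = (W i).map (starRingEnd ℂ)) (k : Fin p) :
    dft3 (fun l => Matrix.of fun r c =>
      ((1 / (p : ℂ)) * ∑ i : Fin p, (starRingEnd ℂ) (tOmega p ^ (l.val * i.val)) * W i r c).re) k
      = W k := by
  haveI : NeZero p := ⟨hp⟩
  have hreal : ∀ (l : Fin p) (r : Fin m) (c : Fin n),
      (((1 / (p : ℂ)) * ∑ i : Fin p, (starRingEnd ℂ) (tOmega p ^ (l.val * i.val)) * W i r c).re : ℂ)
      = (1 / (p : ℂ)) * ∑ i : Fin p, (starRingEnd ℂ) (tOmega p ^ (l.val * i.val)) * W i r c := by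
    intro l r c
    apply Complex.conj_eq_iff_re.mp
    rw [RingHom.map_mul, map_sum]
    rw [show (starRingEnd ℂ) (1 / (p:ℂ)) = 1 / (p:ℂ) by simp]
    congr 1
    rw [← Equiv.sum_comp (Equiv.neg (Fin p))
        (fun i => (starRingEnd ℂ) (tOmega p ^ (l.val * i.val)) * W i r c)]
    apply Finset.sum_congr rfl
    intro i _
    simp only [Equiv.neg_apply]
    rw [RingHom.map_mul, Complex.conj_conj, hconj, Matrix.map_apply,
      mul_comm l.val ((-i : Fin p)).val, tOmega_neg_mul hp i l.val, Complex.conj_conj,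
      mul_comm i.val l.val]
  ext r c
  rw [dft3_apply]
  simp_rw [Matrix.of_apply, hreal, Finset.mul_sum]
  rw [Finset.sum_comm]
  have hpn : ((p : ℂ)) ≠ 0 := Nat.cast_ne_zero.mpr hp
  have : ∀ i : Fin p,
      (∑ l : Fin p, tOmega p ^ (k.val * l.val) *
        (1 / (p:ℂ) * ((starRingEnd ℂ) (tOmega p ^ (l.val * i.val)) * W i r c)))
      = (if k = i then (p:ℂ) else 0) * (1 / (p:ℂ)) * W i r c := by
    intro i
    rw [← tOmega_orthogonal hp k i, Finset.sum_mul, Finset.sum_mul]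
    apply Finset.sum_congr rfl
    intro l _
    rw [mul_comm l.val i.val]
    ring
  simp_rw [this]
  rw [Finset.sum_eq_single k]
  · rw [if_pos rfl]
    field_simp
  · intro i _ hik
    rw [if_neg fun h => hik h.symm, zero_mul, zero_mul]
  · simp



lemma sub_unitary {m d : ℕ} (g : Fin d → Fin m) (hg : Function.Injective g)
    (U : Matrix (Fin m) (Fin m) ℂ) (hU : Uᴴ * U = 1) :
    (U.submatrix id g)ᴴ * U.submatrix id g = 1 := by
  rw [Matrix.conjTranspose_submatrix]
  have h := Matrix.submatrix_mul Uᴴ U g id g Function.bijective_id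
  rw [hU, Matrix.submatrix_one g hg] at h
  exact h.symm

lemma sub_diag {m d : ℕ} (g : Fin d → Fin m) (U : Matrix (Fin m) (Fin m) ℂ)
    (hU : Uᴴ * U = 1) (f : Fin m → ℂ) :
    (U.submatrix id g)ᴴ * (U * Matrix.diagonal f * Uᴴ) * U.submatrix id g
      = (Matrix.diagonal f).submatrix g g := by
  have h1 : (U.submatrix id g)ᴴ * U = (1 : Matrix (Fin m) (Fin m) ℂ).submatrix g id := by
    have h := Matrix.submatrix_mul Uᴴ U g id id Function.bijective_id
    rw [Matrix.submatrix_id_id, hU] at h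
    rw [Matrix.conjTranspose_submatrix]
    exact h.symm
  have h2 : Uᴴ * U.submatrix id g = (1 : Matrix (Fin m) (Fin m) ℂ).submatrix id g := by
    have h := Matrix.submatrix_mul Uᴴ U id id g Function.bijective_id
    rw [Matrix.submatrix_id_id, hU] at h
    exact h.symm
  have e1 : (Matrix.diagonal f).submatrix g id
      = (1 : Matrix (Fin m) (Fin m) ℂ).submatrix g id * Matrix.diagonal f := by
    have h := Matrix.submatrix_mul (1 : Matrix (Fin m) (Fin m) ℂ) (Matrix.diagonal f) g id id
      Function.bijective_id
    rw [Matrix.submatrix_id_id, Matrix.one_mul] at h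
    exact h
  have e2 : (Matrix.diagonal f).submatrix g g
      = (Matrix.diagonal f).submatrix g id * (1 : Matrix (Fin m) (Fin m) ℂ).submatrix id g := by
    have h := Matrix.submatrix_mul (Matrix.diagonal f) (1 : Matrix (Fin m) (Fin m) ℂ) g id g
      Function.bijective_id
    rw [Matrix.mul_one] at h
    exact h
  calc (U.submatrix id g)ᴴ * (U * Matrix.diagonal f * Uᴴ) * U.submatrix id g
      = ((U.submatrix id g)ᴴ * U) * Matrix.diagonal f * (Uᴴ * U.submatrix id g) := by
        simp only [Matrix.mul_assoc]
    _ = (Matrix.diagonal f).submatrix g g := by rw [h1, h2, ← e1, ← e2]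

lemma trace_sub_diag {m d : ℕ} (g : Fin d → Fin m) (f : Fin m → ℂ) :
    ((Matrix.diagonal f).submatrix g g).trace = ∑ j : Fin d, f (g j) := by
  simp [Matrix.trace, Matrix.diag, Matrix.submatrix_apply]

lemma map_conj_CT {m d : ℕ} (M : Matrix (Fin m) (Fin d) ℂ) :
    (M.map (starRingEnd ℂ))ᴴ = Mᴴ.map (starRingEnd ℂ) :=
  Matrix.conjTranspose_map (starRingEnd ℂ) (fun _ => rfl)

lemma trace_map_conj {m : ℕ} (M : Matrix (Fin m) (Fin m) ℂ) :
    (M.map (starRingEnd ℂ)).trace = (starRingEnd ℂ) M.trace := by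
  simp [Matrix.trace, Matrix.diag, Matrix.map_apply, map_sum]

lemma map_univ_castLE {m d : ℕ} (hd : d ≤ m) :
    Finset.univ.map (Fin.castLEEmb hd) = Finset.univ.filter (fun j : Fin m => j.val < d) := by
  ext a
  simp only [Finset.mem_map, Finset.mem_univ, true_and, Finset.mem_filter, Fin.castLEEmb_apply]
  constructor
  · rintro ⟨j, rfl⟩
    exact j.isLt
  · intro h
    exact ⟨⟨a.val, h⟩, rfl⟩

lemma sum_castLE {m d : ℕ} (hd : d ≤ m) (f : Fin m → ℝ) :
    ∑ j : Fin d, f (Fin.castLE hd j)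
      = ∑ j ∈ Finset.univ.filter (fun j : Fin m => j.val < d), f j := by
  rw [← map_univ_castLE hd, Finset.sum_map]
  rfl

lemma sum_mul_le_kyfan {m d : ℕ} (hd : d ≤ m) (μ : Fin m → ℝ) (hμ : Antitone μ)
    (t : Fin m → ℝ) (h0 : ∀ j, 0 ≤ t j) (h1 : ∀ j, t j ≤ 1)
    (hs : ∑ j, t j = (d : ℝ)) :
    ∑ j, μ j * t j ≤ ∑ j : Fin d, μ (Fin.castLE hd j) := by
  rcases Nat.eq_zero_or_pos d with h | hdpos
  · subst h
    have hz := (Finset.sum_eq_zero_iff_of_nonneg (fun j (_ : j ∈ Finset.univ) => h0 j)).mp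
      (by simpa using hs)
    rw [Finset.sum_congr rfl fun j hj => by rw [hz j hj, mul_zero]]
    simp
  · set c := μ ⟨d - 1, lt_of_lt_of_le (Nat.pred_lt (Nat.pos_iff_ne_zero.mp hdpos)) hd⟩ with hc
    have key : ∀ j : Fin m, j.val < d → c ≤ μ j := by
      intro j hj
      apply hμ
      rw [Fin.le_def]
      simp only []
      omega
    have key2 : ∀ j : Fin m, d ≤ j.val → μ j ≤ c := by
      intro j hj
      apply hμ
      rw [Fin.le_def]
      simp only []
      omega
    rw [sum_castLE hd]
    set S := Finset.univ.filter (fun j : Fin m => j.val < d) with hS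
    have hcard : S.card = d := by
      rw [hS, ← map_univ_castLE hd, Finset.card_map, Finset.card_univ, Fintype.card_fin]
    have hsplit : ∑ j ∈ S, (μ j - c) * t j + ∑ j ∈ Finset.univ.filter
        (fun j : Fin m => ¬ (j.val < d)), (μ j - c) * t j = ∑ j, (μ j - c) * t j :=
      Finset.sum_filter_add_sum_filter_not _ _ _
    have b1 : ∑ j ∈ Finset.univ.filter (fun j : Fin m => ¬ (j.val < d)), (μ j - c) * t j ≤ 0 := by
      apply Finset.sum_nonpos
      intro j hj
      have hjd : d ≤ j.val := by
        have := (Finset.mem_filter.mp hj).2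
        omega
      exact mul_nonpos_of_nonpos_of_nonneg (by linarith [key2 j hjd]) (h0 j)
    have b2 : ∑ j ∈ S, (μ j - c) * t j ≤ ∑ j ∈ S, (μ j - c) := by
      apply Finset.sum_le_sum
      intro j hj
      have hjd : j.val < d := (Finset.mem_filter.mp hj).2
      have : 0 ≤ μ j - c := by linarith [key j hjd]
      exact mul_le_of_le_one_right this (h1 j)
    have hSc : ∑ j ∈ S, (μ j - c) = ∑ j ∈ S, μ j - c * d := by
      rw [Finset.sum_sub_distrib, Finset.sum_const, hcard, nsmul_eq_mul, mul_comm]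
    have expand : ∑ j, μ j * t j = ∑ j, (μ j - c) * t j + c * d := by
      rw [← hs, Finset.mul_sum, ← Finset.sum_add_distrib]
      apply Finset.sum_congr rfl
      intro j _
      ring
    have : ∑ j, (μ j - c) * t j ≤ ∑ j ∈ S, (μ j - c) := by
      rw [← hsplit]
      linarith [b1, b2]
    rw [expand]
    rw [hSc] at this
    linarith

lemma kyfan_trace_le {m d : ℕ} (hd : d ≤ m) (μ : Fin m → ℝ) (hμ : Antitone μ)
    (U : Matrix (Fin m) (Fin m) ℂ) (hU : Uᴴ * U = 1)
    (W : Matrix (Fin m) (Fin d) ℂ) (hW : Wᴴ * W = 1) :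
    (Matrix.trace (Wᴴ * (U * Matrix.diagonal (fun j => (μ j : ℂ)) * Uᴴ) * W)).re
      ≤ ∑ j : Fin d, μ (Fin.castLE hd j) := by
  have hUU : U * Uᴴ = 1 := mul_eq_one_comm.mp hU
  set Y := Uᴴ * W with hYdef
  have hY : Yᴴ * Y = 1 := by
    rw [hYdef, Matrix.conjTranspose_mul, Matrix.conjTranspose_conjTranspose,
      Matrix.mul_assoc, ← Matrix.mul_assoc U, hUU, Matrix.one_mul, hW]
  set t : Fin m → ℝ := fun j => ∑ c : Fin d, Complex.normSq (Y j c) with ht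
  have hform : Wᴴ * (U * Matrix.diagonal (fun j => (μ j : ℂ)) * Uᴴ) * W
      = Yᴴ * Matrix.diagonal (fun j => (μ j : ℂ)) * Y := by
    rw [hYdef, Matrix.conjTranspose_mul, Matrix.conjTranspose_conjTranspose]
    simp only [Matrix.mul_assoc]
  have htrace : Matrix.trace (Yᴴ * Matrix.diagonal (fun j => (μ j : ℂ)) * Y)
      = ((∑ j, μ j * t j : ℝ) : ℂ) := by
    rw [Matrix.trace]
    push_cast
    simp only [Matrix.diag_apply, Matrix.mul_apply, Matrix.conjTranspose_apply,
      Matrix.diagonal_apply, ht]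
    rw [Finset.sum_comm]
    apply Finset.sum_congr rfl
    intro j _
    push_cast
    rw [Finset.mul_sum]
    apply Finset.sum_congr rfl
    intro cc _
    rw [Finset.sum_mul]
    rw [Finset.sum_eq_single j]
    · rw [if_pos rfl]
      rw [show star (Y j cc) = (starRingEnd ℂ) (Y j cc) from rfl]
      rw [show (starRingEnd ℂ) (Y j cc) * (((μ j : ℝ)):ℂ) * Y j cc
        = ((μ j : ℝ):ℂ) * ((starRingEnd ℂ) (Y j cc) * Y j cc) from by ring]
      rw [← Complex.normSq_eq_conj_mul_self]
    · intro b _ hb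
      rw [if_neg hb]; ring
    · simp
  have h0 : ∀ j, 0 ≤ t j := fun j => Finset.sum_nonneg fun c _ => Complex.normSq_nonneg _
  have hsum : ∑ j, t j = (d : ℝ) := by
    have h1 : Matrix.trace (Yᴴ * Y) = ((∑ j, t j : ℝ) : ℂ) := by
      rw [Matrix.trace]
      push_cast
      simp only [Matrix.diag_apply, Matrix.mul_apply, Matrix.conjTranspose_apply, ht]
      rw [Finset.sum_comm]
      apply Finset.sum_congr rfl
      intro j _
      push_cast
      apply Finset.sum_congr rfl
      intro cc _
      rw [show star (Y j cc) = (starRingEnd ℂ) (Y j cc) from rfl,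
        ← Complex.normSq_eq_conj_mul_self]
    rw [hY, Matrix.trace_one] at h1
    have h2 := congrArg Complex.re h1
    simpa using h2.symm
  have hP : (Y * Yᴴ) * (Y * Yᴴ) = Y * Yᴴ := by
    rw [Matrix.mul_assoc, ← Matrix.mul_assoc Yᴴ, hY, Matrix.one_mul]
  have hPjj : ∀ j, (Y * Yᴴ) j j = ((t j : ℝ) : ℂ) := by
    intro j
    rw [Matrix.mul_apply, ht]
    push_cast
    apply Finset.sum_congr rfl
    intro cc _
    rw [Matrix.conjTranspose_apply, show star (Y j cc) = (starRingEnd ℂ) (Y j cc) from rfl,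
      Complex.mul_conj]
  have hherm : (Y * Yᴴ)ᴴ = Y * Yᴴ := by
    rw [Matrix.conjTranspose_mul, Matrix.conjTranspose_conjTranspose]
  have h1j : ∀ j, t j ≤ 1 := by
    intro j
    have e : ((t j : ℝ) : ℂ) = ∑ k, ((Complex.normSq ((Y * Yᴴ) j k) : ℝ) : ℂ) := by
      conv_lhs => rw [← hPjj j, ← hP]
      rw [Matrix.mul_apply]
      apply Finset.sum_congr rfl
      intro k _
      have hkj : (Y * Yᴴ) k j = (starRingEnd ℂ) ((Y * Yᴴ) j k) := by
        conv_lhs => rw [← hherm]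
        rw [Matrix.conjTranspose_apply]
        rfl
      rw [hkj, Complex.mul_conj]
    have e2 : t j = ∑ k, Complex.normSq ((Y * Yᴴ) j k) := by exact_mod_cast e
    have e3 : Complex.normSq ((Y * Yᴴ) j j) ≤ ∑ k, Complex.normSq ((Y * Yᴴ) j k) :=
      Finset.single_le_sum (fun k _ => Complex.normSq_nonneg _) (Finset.mem_univ j)
    rw [hPjj j, Complex.normSq_ofReal] at e3
    nlinarith [h0 j, e2]
  rw [hform, htrace, Complex.ofReal_re]
  exact sum_mul_le_kyfan hd μ hμ t h0 h1j hsum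

lemma antitone_multiset_eq {m : ℕ} {μ ν : Fin m → ℝ} (hμ : Antitone μ) (hν : Antitone ν)
    (h : Multiset.map μ Finset.univ.val = Multiset.map ν Finset.univ.val) : μ = ν := by
  have huniv : (Finset.univ : Finset (Fin m)).val = ↑(List.finRange m) := rfl
  have hperm : (List.ofFn μ).Perm (List.ofFn ν) := by
    rw [← Multiset.coe_eq_coe]
    have h1 : (↑(List.ofFn μ) : Multiset ℝ) = Multiset.map μ Finset.univ.val := by
      rw [huniv, List.ofFn_eq_map]
      rfl
    have h2 : (↑(List.ofFn ν) : Multiset ℝ) = Multiset.map ν Finset.univ.val := by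
      rw [huniv, List.ofFn_eq_map]
      rfl
    rw [h1, h2, h]
  have hs1 : (List.ofFn μ).Pairwise (· ≥ ·) := by
    rw [List.pairwise_ofFn]
    intro i j hij
    exact hμ hij.le
  have hs2 : (List.ofFn ν).Pairwise (· ≥ ·) := by
    rw [List.pairwise_ofFn]
    intro i j hij
    exact hν hij.le
  exact List.ofFn_injective (List.Perm.eq_of_pairwise' hs1 hs2 hperm)

lemma diag_unique {m : ℕ} {μ ν : Fin m → ℝ} (hμ : Antitone μ) (hν : Antitone ν)
    {U V : Matrix (Fin m) (Fin m) ℂ} (hU : Uᴴ * U = 1) (hV : Vᴴ * V = 1)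
    (h : U * Matrix.diagonal (fun j => (μ j : ℂ)) * Uᴴ
       = V * Matrix.diagonal (fun j => (ν j : ℂ)) * Vᴴ) : μ = ν := by
  have hdet : ∀ x : ℂ, ∏ j, (x - (μ j : ℂ)) = ∏ j, (x - (ν j : ℂ)) := by
    intro x
    have gen : ∀ (W : Matrix (Fin m) (Fin m) ℂ) (f : Fin m → ℂ), Wᴴ * W = 1 →
        (x • (1 : Matrix (Fin m) (Fin m) ℂ) - W * Matrix.diagonal f * Wᴴ).det
          = ∏ j, (x - f j) := by
      intro W f hW
      have hWW : W * Wᴴ = 1 := mul_eq_one_comm.mp hW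
      have hx1 : x • (1 : Matrix (Fin m) (Fin m) ℂ) = W * (x • (1 : Matrix (Fin m) (Fin m) ℂ)) * Wᴴ := by
        rw [Matrix.mul_smul, Matrix.mul_one, Matrix.smul_mul, hWW]
      rw [hx1, ← Matrix.sub_mul, ← Matrix.mul_sub]
      rw [Matrix.det_mul, Matrix.det_mul]
      have hdetW : W.det * Wᴴ.det = 1 := by
        rw [← Matrix.det_mul, hWW, Matrix.det_one]
      have hDg : x • (1 : Matrix (Fin m) (Fin m) ℂ) - Matrix.diagonal f
          = Matrix.diagonal (fun j => x - f j) := by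
        ext i k
        by_cases hik : i = k
        · subst hik
          simp [Matrix.sub_apply, Matrix.smul_apply, Matrix.diagonal_apply_eq,
            Matrix.one_apply_eq]
        · simp [Matrix.sub_apply, Matrix.smul_apply, Matrix.diagonal_apply_ne _ hik,
            Matrix.one_apply_ne hik]
      rw [hDg, Matrix.det_diagonal, mul_comm, ← mul_assoc, mul_comm Wᴴ.det, hdetW, one_mul]
    rw [← gen U (fun j => (μ j : ℂ)) hU, ← gen V (fun j => (ν j : ℂ)) hV, h]
  -- polynomial identity
  have hpoly : ((Finset.univ.val.map (fun j => ((μ j : ℂ)))).map (fun a => X - C a)).prod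
      = ((Finset.univ.val.map (fun j => ((ν j : ℂ)))).map (fun a => X - C a)).prod := by
    apply Polynomial.funext
    intro x
    rw [Multiset.map_map, Multiset.map_map]
    simp only [Polynomial.eval_multiset_prod, Multiset.map_map, Function.comp]
    simp only [Polynomial.eval_sub, Polynomial.eval_X, Polynomial.eval_C]
    have e1 : ∀ (f : Fin m → ℝ), (Multiset.map (fun j => x - (f j : ℂ)) Finset.univ.val).prod
        = ∏ j, (x - (f j : ℂ)) := fun f => rfl
    rw [e1 μ, e1 ν, hdet x]
  have hroots := congrArg Polynomial.roots hpoly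
  rw [Polynomial.roots_multiset_prod_X_sub_C, Polynomial.roots_multiset_prod_X_sub_C] at hroots
  have hmult : Multiset.map μ Finset.univ.val = Multiset.map ν Finset.univ.val := by
    apply Multiset.map_injective (Complex.ofReal_injective)
    rw [Multiset.map_map, Multiset.map_map]
    exact hroots
  exact antitone_multiset_eq hμ hν hmult

lemma conj_diag_apply {m : ℕ} (U : Matrix (Fin m) (Fin m) ℂ) (f : Fin m → ℂ) (r c : Fin m) :
    (U * Matrix.diagonal f * Uᴴ) r c = ∑ a, U r a * f a * star (U c a) := by
  rw [Matrix.mul_apply]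
  apply Finset.sum_congr rfl
  intro a _
  rw [Matrix.mul_diagonal, Matrix.conjTranspose_apply]

lemma perm_diag {m : ℕ} (U : Matrix (Fin m) (Fin m) ℂ) (f : Fin m → ℂ)
    (σ : Equiv.Perm (Fin m)) :
    (U.submatrix id ⇑σ) * Matrix.diagonal (f ∘ ⇑σ) * (U.submatrix id ⇑σ)ᴴ
      = U * Matrix.diagonal f * Uᴴ := by
  ext r c
  rw [conj_diag_apply, conj_diag_apply]
  rw [← Equiv.sum_comp σ (fun a => U r a * f a * star (U c a))]
  apply Finset.sum_congr rfl
  intro a _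
  simp [Matrix.submatrix_apply, Function.comp]

lemma mapC_mul {a b c : ℕ} (M : Matrix (Fin a) (Fin b) ℝ) (N : Matrix (Fin b) (Fin c) ℝ) :
    (M * N).map (fun x => (x : ℂ)) = M.map (fun x => (x : ℂ)) * N.map (fun x => (x : ℂ)) := by
  ext r c
  simp only [Matrix.mul_apply, Matrix.map_apply]
  push_cast
  rfl

lemma slice_construct_easy {m d : ℕ} (hd : d ≤ m) (μ0 : Fin m → ℝ)
    (Ac : Matrix (Fin m) (Fin m) ℂ)
    (hs : ∃ U : Matrix (Fin m) (Fin m) ℂ, Uᴴ * U = 1 ∧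
      Ac = U * Matrix.diagonal (fun j => (μ0 j : ℂ)) * Uᴴ) :
    ∃ W : Matrix (Fin m) (Fin d) ℂ, Wᴴ * W = 1 ∧
      (Wᴴ * Ac * W).trace = ((∑ j : Fin d, μ0 (Fin.castLE hd j) : ℝ) : ℂ) := by
  obtain ⟨U, hU, hA⟩ := hs
  refine ⟨U.submatrix id (Fin.castLE hd), sub_unitary _ (Fin.castLE_injective hd) U hU, ?_⟩
  rw [hA, sub_diag _ U hU, trace_sub_diag]
  push_cast
  rfl

lemma slice_construct_real {m d : ℕ} (hd : d ≤ m) (μ0 : Fin m → ℝ) (hμ0 : Antitone μ0)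
    (Ac : Matrix (Fin m) (Fin m) ℂ)
    (hAr : Ac.map (starRingEnd ℂ) = Ac)
    (hs : ∃ U : Matrix (Fin m) (Fin m) ℂ, Uᴴ * U = 1 ∧
      Ac = U * Matrix.diagonal (fun j => (μ0 j : ℂ)) * Uᴴ) :
    ∃ W : Matrix (Fin m) (Fin d) ℂ, Wᴴ * W = 1 ∧
      (Wᴴ * Ac * W).trace = ((∑ j : Fin d, μ0 (Fin.castLE hd j) : ℝ) : ℂ) ∧
      W.map (starRingEnd ℂ) = W := by
  obtain ⟨U, hU, hA⟩ := hs
  -- Ac is Hermitian with real entries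
  have hAH : Acᴴ = Ac := by
    rw [hA]
    rw [Matrix.conjTranspose_mul, Matrix.conjTranspose_mul,
      Matrix.conjTranspose_conjTranspose, Matrix.diagonal_conjTranspose]
    have : star (fun j => ((μ0 j : ℝ) : ℂ)) = fun j => ((μ0 j : ℝ) : ℂ) := by
      funext j
      simp [Pi.star_apply, Complex.star_def, Complex.conj_ofReal]
    rw [this, Matrix.mul_assoc]
  set B : Matrix (Fin m) (Fin m) ℝ := Matrix.of (fun r c => (Ac r c).re) with hB
  have hmap : B.map (fun x => (x : ℂ)) = Ac := by
    ext r c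
    have : (starRingEnd ℂ) (Ac r c) = Ac r c := by
      have := congrFun (congrFun hAr r) c
      simpa [Matrix.map_apply] using this
    simpa [Matrix.map_apply, hB] using Complex.conj_eq_iff_re.mp this
  have hBH : B.IsHermitian := by
    rw [Matrix.IsHermitian]
    ext r c
    have : Ac r c = star (Ac c r) := by
      conv_lhs => rw [← hAH]
      rw [Matrix.conjTranspose_apply]
    simp only [Matrix.conjTranspose_apply, hB, Matrix.of_apply, star_trivial]
    rw [this]
    simp [Complex.star_def]
  -- real spectral theorem
  set O : Matrix (Fin m) (Fin m) ℝ := (hBH.eigenvectorUnitary : Matrix (Fin m) (Fin m) ℝ)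
    with hO
  have hOu : Oᴴ * O = 1 := by
    have := hBH.eigenvectorUnitary.2
    rw [Unitary.mem_iff] at this
    exact this.1
  have hspec0 := hBH.spectral_theorem
  have hspecR : B = O * Matrix.diagonal hBH.eigenvalues * Oᴴ := by
    rw [Unitary.conjStarAlgAut_apply] at hspec0
    exact hspec0
  set lam := hBH.eigenvalues with hlam
  set σ : Equiv.Perm (Fin m) := Tuple.sort (fun j => - lam j) with hσ
  have hmono := Tuple.monotone_sort (fun j => - lam j)
  have hν : Antitone (lam ∘ ⇑σ) := by
    intro a b hab
    have := hmono hab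
    simp only [Function.comp] at this ⊢
    linarith
  set Uc : Matrix (Fin m) (Fin m) ℂ := O.map (fun x => (x : ℂ)) with hUc
  have hCT : Oᴴ.map (fun x => (x : ℂ)) = Ucᴴ := by
    ext r c
    simp [Matrix.conjTranspose_apply, Matrix.map_apply, Complex.star_def,
      Complex.conj_ofReal, hUc]
  have hUcu : Ucᴴ * Uc = 1 := by
    rw [← hCT, hUc, ← mapC_mul, hOu]
    ext r c
    by_cases hrc : r = c
    · subst hrc
      simp [Matrix.map_apply, Matrix.one_apply_eq]
    · simp [Matrix.map_apply, Matrix.one_apply_ne hrc]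
  have hdiagmap : (Matrix.diagonal lam).map (fun x => (x : ℂ))
      = Matrix.diagonal (fun j => ((lam j : ℝ) : ℂ)) := by
    rw [Matrix.diagonal_map]
    simp
  have hAc2 : Ac = Uc * Matrix.diagonal (fun j => ((lam j : ℝ) : ℂ)) * Ucᴴ := by
    rw [← hmap, hspecR, mapC_mul, mapC_mul, hdiagmap, hCT, hUc]
  have hAc3 : Ac = (Uc.submatrix id ⇑σ)
      * Matrix.diagonal (fun j => ((lam (σ j) : ℝ) : ℂ)) * (Uc.submatrix id ⇑σ)ᴴ := by
    rw [show (fun j => ((lam (σ j) : ℝ) : ℂ)) = (fun j => ((lam j : ℝ) : ℂ)) ∘ ⇑σ from rfl,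
      perm_diag]
    exact hAc2
  have hsub_u : (Uc.submatrix id ⇑σ)ᴴ * (Uc.submatrix id ⇑σ) = 1 :=
    sub_unitary _ σ.injective Uc hUcu
  have hμν : lam ∘ ⇑σ = μ0 := diag_unique hν hμ0 hsub_u hU (by rw [← hA]; exact hAc3.symm)
  set U2 := Uc.submatrix id ⇑σ with hU2
  refine ⟨U2.submatrix id (Fin.castLE hd),
    sub_unitary _ (Fin.castLE_injective hd) U2 hsub_u, ?_, ?_⟩
  · rw [hAc3, sub_diag _ U2 hsub_u, trace_sub_diag]
    have : ∀ j : Fin d, lam (σ (Fin.castLE hd j)) = μ0 (Fin.castLE hd j) := by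
      intro j
      exact congrFun hμν (Fin.castLE hd j)
    push_cast
    apply Finset.sum_congr rfl
    intro j _
    rw [this j]
  · ext r c
    simp [hU2, hUc, Matrix.submatrix_apply, Matrix.map_apply, Complex.conj_ofReal]


lemma dft3_inj {m n p : ℕ} (hp : p ≠ 0) (X Y : Fin p → Matrix (Fin m) (Fin n) ℝ)
    (h : ∀ k, dft3 X k = dft3 Y k) : X = Y := by
  funext l
  ext r c
  have key : ∀ (Z : Fin p → Matrix (Fin m) (Fin n) ℝ),
      ∑ k : Fin p, (starRingEnd ℂ) (tOmega p ^ (l.val * k.val)) * dft3 Z k r c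
        = (p : ℂ) * ((Z l r c : ℝ) : ℂ) := by
    intro Z
    simp_rw [dft3_apply, Finset.mul_sum]
    rw [Finset.sum_comm]
    have inner : ∀ l' : Fin p, (∑ k : Fin p, (starRingEnd ℂ) (tOmega p ^ (l.val * k.val)) *
        (tOmega p ^ (k.val * l'.val) * ((Z l' r c : ℝ) : ℂ)))
        = (if l' = l then (p : ℂ) else 0) * ((Z l' r c : ℝ) : ℂ) := by
      intro l'
      rw [← tOmega_orthogonal hp l' l, Finset.sum_mul]
      apply Finset.sum_congr rfl
      intro k _
      rw [mul_comm k.val l'.val]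
      ring
    simp_rw [inner]
    rw [Finset.sum_eq_single l]
    · rw [if_pos rfl]
    · intro b _ hb
      rw [if_neg hb, zero_mul]
    · simp
  have h2 : (p : ℂ) * ((X l r c : ℝ) : ℂ) = (p : ℂ) * ((Y l r c : ℝ) : ℂ) := by
    rw [← key X, ← key Y]
    apply Finset.sum_congr rfl
    intro k _
    rw [h k]
  have hpn : ((p : ℂ)) ≠ 0 := Nat.cast_ne_zero.mpr hp
  have h3 := mul_left_cancel₀ hpn h2
  exact_mod_cast h3

end AuxLemmas
/-- Tensor trace maximization: for an f-symmetric f-positive-definite tensor A,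
    max over V with V^T * V = I of Trace_f(V^T * A * V) = (1/p) Σ_i Σ_{j<d} λ_j(Â_i). -/
theorem tensor_trace_max (m d p : ℕ) (hd : d ≤ m)
    (A : Fin p → Matrix (Fin m) (Fin m) ℝ)
    (hsym : ∀ i, (dft3 A i).IsHermitian)
    (hpd : ∀ i, (dft3 A i).PosDef)
    (μ : Fin p → Fin m → ℝ)
    (hdec : ∀ i, Antitone (μ i))
    (hspec : ∀ i, ∃ U : Matrix (Fin m) (Fin m) ℂ, Uᴴ * U = 1 ∧
        dft3 A i = U * Matrix.diagonal (fun j => (μ i j : ℂ)) * Uᴴ) :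
    IsGreatest { t : ℝ | ∃ V : Fin p → Matrix (Fin m) (Fin d) ℝ,
        tProd (tTrans V) V = tId d p ∧
        tTraceF (tProd (tTrans V) (tProd A V)) = (t : ℂ) }
      ((1 / (p : ℝ)) * ∑ i : Fin p, ∑ j : Fin d, μ i (Fin.castLE hd j)) := by
  by_cases hp : p = 0
  · subst hp
    constructor
    · refine ⟨fun _ => 0, ?_, ?_⟩
      · funext k
        exact k.elim0
      · simp [tTraceF]
    · rintro t ⟨V, _, hVt⟩
      have h0 : (t : ℂ) = 0 := by
        rw [← hVt, tTraceF]
        simp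
      have : t = 0 := by exact_mod_cast h0
      simp [this]
  · haveI : NeZero p := ⟨hp⟩
    constructor
    · -- membership : construct an optimal V
      have key : ∀ i : Fin p, ∃ W : Matrix (Fin m) (Fin d) ℂ, Wᴴ * W = 1 ∧
          (Wᴴ * dft3 A i * W).trace = ((∑ j : Fin d, μ i (Fin.castLE hd j) : ℝ) : ℂ) ∧
          (i = -i → W.map (starRingEnd ℂ) = W) := by
        intro i
        by_cases hi : i = -i
        · obtain ⟨W, h1, h2, h3⟩ := slice_construct_real hd (μ i) (hdec i) (dft3 A i)
            (by rw [← dft3_neg hp A i, ← hi]) (hspec i)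
          exact ⟨W, h1, h2, fun _ => h3⟩
        · obtain ⟨W, h1, h2⟩ := slice_construct_easy hd (μ i) (dft3 A i) (hspec i)
          exact ⟨W, h1, h2, fun h => absurd h hi⟩
      choose Wf hW1 hW2 hW3 using key
      have conj_invol : ∀ {a b : ℕ} (M : Matrix (Fin a) (Fin b) ℂ),
          (M.map (starRingEnd ℂ)).map (starRingEnd ℂ) = M := by
        intro a b M
        ext r c
        simp [Matrix.map_apply]
      have hdiagr : ∀ i : Fin p, (Matrix.diagonal (fun j => ((μ i j : ℝ) : ℂ))).map
          (starRingEnd ℂ) = Matrix.diagonal (fun j => ((μ i j : ℝ) : ℂ)) := by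
        intro i
        rw [Matrix.diagonal_map (by simp)]
        congr 1
        funext j
        simp [Complex.conj_ofReal]
      have μneg : ∀ i, μ (-i) = μ i := by
        intro i
        obtain ⟨U, hU, hA1⟩ := hspec i
        obtain ⟨U2, hU2, hA2⟩ := hspec (-i)
        have hcu : (U.map (starRingEnd ℂ))ᴴ * (U.map (starRingEnd ℂ)) = 1 := by
          rw [map_conj_CT, ← Matrix.map_mul, hU]
          ext r c
          by_cases hrc : r = c
          · subst hrc
            simp [Matrix.map_apply, Matrix.one_apply_eq]
          · simp [Matrix.map_apply, Matrix.one_apply_ne hrc]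
        have hneg : dft3 A (-i) = (U.map (starRingEnd ℂ)) *
            Matrix.diagonal (fun j => ((μ i j : ℝ) : ℂ)) * (U.map (starRingEnd ℂ))ᴴ := by
          rw [dft3_neg hp, hA1, Matrix.map_mul, Matrix.map_mul, hdiagr i, map_conj_CT]
        exact diag_unique (hdec (-i)) (hdec i) hU2 hcu (hA2.symm.trans hneg)
      set What : Fin p → Matrix (Fin m) (Fin d) ℂ :=
        fun i => if ((-i : Fin p).val < i.val) then (Wf (-i)).map (starRingEnd ℂ) else Wf i
        with hWhat
      have hWconj : ∀ i, What (-i) = (What i).map (starRingEnd ℂ) := by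
        intro i
        rcases lt_trichotomy ((-i : Fin p).val) (i.val) with hlt | heq | hgt
        · rw [hWhat]
          dsimp only
          rw [if_pos hlt]
          have hnn : (-(-i) : Fin p) = i := neg_neg i
          have hc : ¬ ((-(-i) : Fin p).val < (-i : Fin p).val) := by
            rw [hnn]
            omega
          rw [if_neg hc]
          exact (conj_invol _).symm
        · have heqi : (-i : Fin p) = i := Fin.ext heq
          rw [heqi, hWhat]
          dsimp only
          have hc : ¬ ((-i : Fin p).val < i.val) := by omega
          rw [if_neg hc]
          exact (hW3 i heqi.symm).symm
        · rw [hWhat]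
          dsimp only
          have h1 : ¬ ((-i : Fin p).val < i.val) := by omega
          rw [if_neg h1]
          have hnn : (-(-i) : Fin p) = i := neg_neg i
          have h2 : ((-(-i) : Fin p).val < (-i : Fin p).val) := by
            rw [hnn]
            exact hgt
          rw [if_pos h2, hnn]
      have hWunit : ∀ i, (What i)ᴴ * What i = 1 := by
        intro i
        rw [hWhat]
        dsimp only
        split_ifs with h
        · rw [map_conj_CT, ← Matrix.map_mul, hW1]
          ext r c
          by_cases hrc : r = c
          · subst hrc
            simp [Matrix.map_apply, Matrix.one_apply_eq]
          · simp [Matrix.map_apply, Matrix.one_apply_ne hrc]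
        · exact hW1 i
      have hWtr : ∀ i, ((What i)ᴴ * dft3 A i * What i).trace
          = ((∑ j : Fin d, μ i (Fin.castLE hd j) : ℝ) : ℂ) := by
        intro i
        rw [hWhat]
        dsimp only
        split_ifs with h
        · have hAis : dft3 A i = (dft3 A (-i)).map (starRingEnd ℂ) := by
            have := dft3_neg hp A (-i)
            rwa [neg_neg] at this
          rw [hAis, map_conj_CT, ← Matrix.map_mul, ← Matrix.map_mul, trace_map_conj,
            hW2 (-i), Complex.conj_ofReal, μneg i]
        · exact hW2 i
      set V : Fin p → Matrix (Fin m) (Fin d) ℝ := fun l => Matrix.of fun r c =>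
        ((1 / (p : ℂ)) * ∑ i : Fin p, (starRingEnd ℂ) (tOmega p ^ (l.val * i.val))
          * What i r c).re with hV
      have hdftV : ∀ k, dft3 V k = What k := fun k => dft3_idft hp What hWconj k
      refine ⟨V, ?_, ?_⟩
      · apply dft3_inj hp
        intro k
        rw [dft3_tProd hp, dft3_tTrans hp, dft3_tId hp, hdftV, hWunit]
      · rw [tTraceF]
        have htr : ∀ i : Fin p, (dft3 (tProd (tTrans V) (tProd A V)) i).trace
            = ((∑ j : Fin d, μ i (Fin.castLE hd j) : ℝ) : ℂ) := by
          intro i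
          rw [dft3_tProd hp, dft3_tTrans hp, dft3_tProd hp, hdftV, ← Matrix.mul_assoc]
          exact hWtr i
        rw [Finset.sum_congr rfl (fun i _ => htr i)]
        push_cast
        ring
    · -- upper bound
      rintro t ⟨V, hVc, hVt⟩
      have hW : ∀ i, (dft3 V i)ᴴ * dft3 V i = 1 := by
        intro i
        have h2 : dft3 (tProd (tTrans V) V) i = dft3 (tId d p) i := by rw [hVc]
        rwa [dft3_tProd hp, dft3_tTrans hp, dft3_tId hp] at h2
      have htr : (t : ℂ) = (1 / (p : ℂ)) *
          ∑ i, ((dft3 V i)ᴴ * dft3 A i * dft3 V i).trace := by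
        rw [← hVt, tTraceF]
        congr 1
        apply Finset.sum_congr rfl
        intro i _
        rw [dft3_tProd hp, dft3_tTrans hp, dft3_tProd hp, Matrix.mul_assoc]
      have hre : t = (1 / (p : ℝ)) *
          ∑ i, ((dft3 V i)ᴴ * dft3 A i * dft3 V i).trace.re := by
        have h2 := congrArg Complex.re htr
        rw [Complex.ofReal_re] at h2
        rw [h2, show (1 / (p : ℂ)) = (((1 / (p : ℝ)) : ℝ) : ℂ) by push_cast; ring,
          Complex.re_ofReal_mul]
        congr 1
        exact Complex.re_sum _ _
      rw [hre]
      apply mul_le_mul_of_nonneg_left ?_ (by positivity)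
      apply Finset.sum_le_sum
      intro i _
      obtain ⟨U, hU, hA1⟩ := hspec i
      have hk := kyfan_trace_le hd (μ i) (hdec i) U hU (dft3 V i) (hW i)
      rw [← hA1] at hk
      exact hk
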